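/- Poincaré inequality on the unit square with the sharp constant 2π² (the value λ₁((0,1)²) = 2π², equivalently the embedding constant C₂ = (2π²)^{−1/2} used in the paper): Let v : ℝ² → ℝ be continuously differentiable (ContDiff ℝ 1) with v(x) = 0 for every x outside the open unit square Q = {x : 0 < x₀ < 1 and 0 < x₁ < 1}. Then 2π² ∫ v(x)² dx ≤ ∫ ‖fderiv ℝ v x‖² dx, where the integrals are over ℝ² with respect to Lebesgue measure. -/

import Mathlib

open MeasureTheory Real

set_option maxHeartbeats 1000000

local notation "E2" => EuclideanSpace ℝ (Fin 2)

/-- 1-D sharp Poincaré inequality on `(0,1)` for `C¹` functions vanishing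
outside the open interval. -/
lemma poincare_aux_oneD (f : ℝ → ℝ) (hf : ContDiff ℝ 1 f)
    (h0 : ∀ x : ℝ, x ∉ Set.Ioo (0:ℝ) 1 → f x = 0) :
    Real.pi ^ 2 * ∫ x : ℝ, (f x) ^ 2 ≤ ∫ x : ℝ, (deriv f x) ^ 2 := by
  have hfc : Continuous f := hf.continuous
  have hfd : Differentiable ℝ f := hf.differentiable one_ne_zero
  have hf'c : Continuous (deriv f) := hf.continuous_deriv le_rfl
  have hderiv0 : ∀ x : ℝ, x ∉ Set.Icc (0:ℝ) 1 → deriv f x = 0 := by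
    intro x hx
    have hopen : IsOpen ((Set.Icc (0:ℝ) 1)ᶜ) := isClosed_Icc.isOpen_compl
    have hev : f =ᶠ[nhds x] (fun _ => 0) := by
      filter_upwards [hopen.mem_nhds hx] with y hy
      exact h0 y (fun h => hy ⟨le_of_lt h.1, le_of_lt h.2⟩)
    rw [hev.deriv_eq]; simp
  obtain ⟨M, hM⟩ : ∃ M, ∀ x ∈ Set.Icc (0:ℝ) 1, ‖deriv f x‖ ≤ M :=
    isCompact_Icc.exists_bound_of_continuousOn hf'c.continuousOn
  have hM0 : 0 ≤ M := le_trans (norm_nonneg _) (hM 0 (by norm_num))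
  -- growth bound near the endpoints
  have hfb : ∀ x ∈ Set.Icc (0:ℝ) 1, |f x| ≤ M * min x (1 - x) := by
    intro x hx
    have hf00 : f 0 = 0 := h0 0 (by norm_num)
    have hf11 : f 1 = 0 := h0 1 (by norm_num)
    have hconv : Convex ℝ (Set.Icc (0:ℝ) 1) := convex_Icc 0 1
    have h0m : (0:ℝ) ∈ Set.Icc (0:ℝ) 1 := by norm_num
    have h1m : (1:ℝ) ∈ Set.Icc (0:ℝ) 1 := by norm_num
    have k0 : ‖f x - f 0‖ ≤ M * ‖x - 0‖ :=
      hconv.norm_image_sub_le_of_norm_deriv_le (fun y _ => hfd y) hM h0m hx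
    have k1 : ‖f x - f 1‖ ≤ M * ‖x - 1‖ :=
      hconv.norm_image_sub_le_of_norm_deriv_le (fun y _ => hfd y) hM h1m hx
    simp only [hf00, hf11, sub_zero, Real.norm_eq_abs] at k0 k1
    rw [abs_of_nonneg hx.1] at k0
    rw [abs_sub_comm, abs_of_nonneg (by linarith [hx.2] : (0:ℝ) ≤ 1 - x)] at k1
    rcases le_total x (1 - x) with h | h
    · rw [min_eq_left h]; exact k0
    · rw [min_eq_right h]; exact k1
  set h : ℝ → ℝ := fun x => (deriv f x) ^ 2 - π ^ 2 * (f x) ^ 2 with hh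
  have hhc : Continuous h := by
    exact (hf'c.pow 2).sub (continuous_const.mul (hfc.pow 2))
  set K : ℝ → ℝ := fun x => Real.cos (π * x) * (f x) ^ 2 / Real.sin (π * x) with hK
  set φ : ℝ → ℝ := fun x =>
      -(π * (f x) ^ 2) + 2 * Real.cos (π * x) * f x * deriv f x / Real.sin (π * x)
        - π * (Real.cos (π * x)) ^ 2 * (f x) ^ 2 / (Real.sin (π * x)) ^ 2 with hφ
  have hsin_pos : ∀ x : ℝ, 0 < x → x < 1 → 0 < Real.sin (π * x) := by
    intro x hx1 hx2
    apply Real.sin_pos_of_pos_of_lt_pi (by positivity)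
    nlinarith [Real.pi_pos]
  have hKderiv : ∀ x : ℝ, Real.sin (π * x) ≠ 0 → HasDerivAt K (φ x) x := by
    intro x hsx
    have hlin : HasDerivAt (fun y : ℝ => π * y) π x := by
      simpa using (hasDerivAt_id x).const_mul π
    have hds : HasDerivAt (fun y : ℝ => Real.sin (π * y)) (Real.cos (π * x) * π) x :=
      (Real.hasDerivAt_sin (π * x)).comp x hlin
    have hdc : HasDerivAt (fun y : ℝ => Real.cos (π * y)) (-Real.sin (π * x) * π) x :=
      (Real.hasDerivAt_cos (π * x)).comp x hlin
    have hdf2 : HasDerivAt (fun y : ℝ => (f y) ^ 2) (2 * f x * deriv f x) x := by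
      have hmul := (hfd x).hasDerivAt.mul (hfd x).hasDerivAt
      have h2 : (fun y : ℝ => f y * f y) = fun y : ℝ => (f y) ^ 2 := by
        funext y; ring
      rw [show f * f = fun y : ℝ => (f y) ^ 2 from h2] at hmul
      exact hmul.congr_deriv (by ring)
    have hN : HasDerivAt (fun y : ℝ => Real.cos (π * y) * (f y) ^ 2)
        (-Real.sin (π * x) * π * (f x) ^ 2 + Real.cos (π * x) * (2 * f x * deriv f x)) x :=
      hdc.mul hdf2
    have := hN.div hds hsx
    refine this.congr_deriv ?_
    rw [hφ]
    field_simp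
  have key : ∀ a b : ℝ, 0 < a → a ≤ 1/2 → 1/2 ≤ b → b < 1 →
      -(π * (M^2 * a / 2) + π * (M^2 * (1-b) / 2)) ≤ ∫ x in a..b, h x := by
    intro a b ha h2a h2b hb
    have hab : a ≤ b := le_trans h2a h2b
    have hsub : Set.Icc a b ⊆ Set.Ioo (0:ℝ) 1 := fun x hx =>
      ⟨lt_of_lt_of_le ha hx.1, lt_of_le_of_lt hx.2 hb⟩
    have hsne : ∀ x ∈ Set.Icc a b, Real.sin (π * x) ≠ 0 := fun x hx =>
      ne_of_gt (hsin_pos x (hsub hx).1 (hsub hx).2)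
    have hφcont : ContinuousOn φ (Set.Icc a b) := by
      apply ContinuousOn.sub
      apply ContinuousOn.add
      · exact (continuous_const.mul (hfc.pow 2)).neg.continuousOn
      · exact ((((continuous_const.mul (Real.continuous_cos.comp
            (continuous_const.mul continuous_id))).mul hfc).mul hf'c).continuousOn).div
          ((Real.continuous_sin.comp (continuous_const.mul continuous_id)).continuousOn) hsne
      · refine ContinuousOn.div ?_ ?_ (fun x hx => pow_ne_zero 2 (hsne x hx))
        · exact ((continuous_const.mul ((Real.continuous_cos.comp
            (continuous_const.mul continuous_id)).pow 2)).mul (hfc.pow 2)).continuousOn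
        · exact ((Real.continuous_sin.comp (continuous_const.mul continuous_id)).pow 2).continuousOn
    have hint : ∫ x in a..b, φ x = K b - K a := by
      apply intervalIntegral.integral_eq_sub_of_hasDerivAt
      · intro x hx
        rw [Set.uIcc_of_le hab] at hx
        exact hKderiv x (hsne x hx)
      · rw [intervalIntegrable_iff_integrableOn_Icc_of_le hab]
        exact hφcont.integrableOn_compact isCompact_Icc
    have hmono : ∫ x in a..b, π * φ x ≤ ∫ x in a..b, h x := by
      apply intervalIntegral.integral_mono_on hab
      · apply IntervalIntegrable.const_mul
        rw [intervalIntegrable_iff_integrableOn_Icc_of_le hab]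
        exact hφcont.integrableOn_compact isCompact_Icc
      · exact (hhc.intervalIntegrable a b)
      · intro x hx
        have hs := hsne x hx
        have hiden : h x = (deriv f x - π * Real.cos (π * x) * f x / Real.sin (π * x)) ^ 2
            + π * φ x := by
          rw [hh, hφ]
          field_simp
          ring
        rw [hiden]
        linarith [sq_nonneg (deriv f x - π * Real.cos (π * x) * f x / Real.sin (π * x))]
    have hKa : |K a| ≤ M^2 * a / 2 := by
      have hsa := hsin_pos a ha (lt_of_le_of_lt h2a one_half_lt_one)
      have hsin_ge : 2 * a ≤ Real.sin (π * a) := by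
        have := Real.mul_le_sin (x := π * a) (by positivity)
          (by nlinarith [Real.pi_pos])
        calc 2 * a = 2 / π * (π * a) := by field_simp
        _ ≤ Real.sin (π * a) := this
      have hfa : |f a| ≤ M * a := by
        have := hfb a ⟨le_of_lt ha, by linarith⟩
        exact this.trans (by nlinarith [min_le_left a (1-a)])
      rw [hK, abs_div, abs_mul, abs_of_pos hsa, div_le_iff₀ hsa,
        abs_of_nonneg (sq_nonneg (f a))]
      have h1 : |Real.cos (π * a)| ≤ 1 := Real.abs_cos_le_one _
      have hfa2 : (f a)^2 ≤ M^2 * a^2 := by nlinarith [sq_abs (f a), abs_nonneg (f a)]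
      calc |Real.cos (π * a)| * (f a)^2 ≤ 1 * (f a)^2 :=
            mul_le_mul_of_nonneg_right h1 (sq_nonneg _)
        _ = (f a)^2 := one_mul _
        _ ≤ M^2 * a^2 := hfa2
        _ = M^2 * a / 2 * (2 * a) := by ring
        _ ≤ M^2 * a / 2 * Real.sin (π * a) :=
            mul_le_mul_of_nonneg_left hsin_ge (by positivity)
    have hKb : |K b| ≤ M^2 * (1-b) / 2 := by
      have hb0 : 0 < b := lt_of_lt_of_le one_half_pos h2b
      have hsb := hsin_pos b hb0 hb
      have hsin_ge : 2 * (1-b) ≤ Real.sin (π * b) := by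
        have hrw : Real.sin (π * b) = Real.sin (π * (1 - b)) := by
          rw [mul_one_sub, Real.sin_pi_sub]
        rw [hrw]
        have := Real.mul_le_sin (x := π * (1-b)) (by nlinarith [Real.pi_pos])
          (by nlinarith [Real.pi_pos])
        calc 2 * (1-b) = 2 / π * (π * (1-b)) := by field_simp
        _ ≤ Real.sin (π * (1-b)) := this
      have hfa : |f b| ≤ M * (1-b) := by
        have := hfb b ⟨le_of_lt hb0, le_of_lt hb⟩
        exact this.trans (by nlinarith [min_le_right b (1-b)])
      rw [hK, abs_div, abs_mul, abs_of_pos hsb, div_le_iff₀ hsb,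
        abs_of_nonneg (sq_nonneg (f b))]
      have h1 : |Real.cos (π * b)| ≤ 1 := Real.abs_cos_le_one _
      have hfa2 : (f b)^2 ≤ M^2 * (1-b)^2 := by nlinarith [sq_abs (f b), abs_nonneg (f b)]
      calc |Real.cos (π * b)| * (f b)^2 ≤ 1 * (f b)^2 :=
            mul_le_mul_of_nonneg_right h1 (sq_nonneg _)
        _ = (f b)^2 := one_mul _
        _ ≤ M^2 * (1-b)^2 := hfa2
        _ = M^2 * (1-b) / 2 * (2 * (1-b)) := by ring
        _ ≤ M^2 * (1-b) / 2 * Real.sin (π * b) :=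
            mul_le_mul_of_nonneg_left hsin_ge (by nlinarith)
    have hπ : 0 < π := Real.pi_pos
    calc -(π * (M^2 * a / 2) + π * (M^2 * (1-b) / 2))
        = π * (-(M^2 * a / 2 + M^2 * (1-b) / 2)) := by ring
      _ ≤ π * (K b - K a) := by
          apply mul_le_mul_of_nonneg_left _ hπ.le
          have h1 : K a ≤ M^2 * a / 2 := (le_abs_self _).trans hKa
          have h2 : -(M^2 * (1-b) / 2) ≤ K b := by
            have := neg_abs_le (K b); linarith
          linarith
      _ = ∫ x in a..b, π * φ x := by
          rw [intervalIntegral.integral_const_mul, hint]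
      _ ≤ ∫ x in a..b, h x := hmono
  -- limit argument
  have hHcont : Continuous (fun t => ∫ x in (0:ℝ)..t, h x) :=
    intervalIntegral.continuous_primitive (fun a b => hhc.intervalIntegrable a b) 0
  set H : ℝ → ℝ := fun t => ∫ x in (0:ℝ)..t, h x with hHdef
  have hH1 : 0 ≤ H 1 := by
    have htend : Filter.Tendsto (fun ε : ℝ => H (1 - ε) - H ε) (nhdsWithin 0 (Set.Ioi 0))
        (nhds (H 1 - H 0)) := by
      apply Filter.Tendsto.sub
      · refine (hHcont.tendsto 1).comp ?_
        have hc1 : Continuous (fun ε : ℝ => 1 - ε) := continuous_const.sub continuous_id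
        have : Filter.Tendsto (fun ε : ℝ => 1 - ε) (nhds 0) (nhds 1) := by
          simpa using hc1.tendsto 0
        exact this.mono_left nhdsWithin_le_nhds
      · exact (hHcont.tendsto 0).comp (by
          exact (Filter.tendsto_id (α := ℝ)).mono_left (nhdsWithin_le_nhds))
    have htend0 : Filter.Tendsto (fun ε : ℝ => -(π * M^2 * ε)) (nhdsWithin 0 (Set.Ioi 0))
        (nhds 0) := by
      have : Filter.Tendsto (fun ε : ℝ => -(π * M^2 * ε)) (nhds 0) (nhds (-(π * M^2 * 0))) :=
        ((continuous_const.mul continuous_id).neg).tendsto 0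
      simpa using this.mono_left nhdsWithin_le_nhds
    have hev : ∀ᶠ ε in nhdsWithin (0:ℝ) (Set.Ioi 0), -(π * M^2 * ε) ≤ H (1 - ε) - H ε := by
      filter_upwards [self_mem_nhdsWithin,
        eventually_nhdsWithin_of_eventually_nhds
          (eventually_lt_nhds (by norm_num : (0:ℝ) < 1/2))] with ε hε1 hε2
      have hε1' : (0:ℝ) < ε := hε1
      have hkey := key ε (1 - ε) hε1' (le_of_lt hε2) (by linarith) (by linarith)
      have hsplit : ∫ x in ε..(1-ε), h x = H (1-ε) - H ε := by
        rw [hHdef]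
        have := intervalIntegral.integral_add_adjacent_intervals
          (hhc.intervalIntegrable (μ := volume) 0 ε)
          (hhc.intervalIntegrable (μ := volume) ε (1-ε))
        linarith [this]
      rw [hsplit] at hkey
      calc -(π * M^2 * ε) = -(π * (M^2 * ε / 2) + π * (M^2 * (1-(1-ε)) / 2)) := by ring
        _ ≤ H (1-ε) - H ε := hkey
    have hH0 : H 0 = 0 := by simp [hHdef]
    have := le_of_tendsto_of_tendsto htend0 htend hev
    rw [hH0] at this; linarith
  -- convert integrals over ℝ to interval integrals
  have hf2eq : ∫ x : ℝ, (f x)^2 = ∫ x in (0:ℝ)..1, (f x)^2 := by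
    rw [← MeasureTheory.setIntegral_eq_integral_of_forall_compl_eq_zero
      (s := Set.Icc (0:ℝ) 1) (fun x hx => by
        rw [h0 x (fun hm => hx ⟨le_of_lt hm.1, le_of_lt hm.2⟩)]; ring)]
    rw [MeasureTheory.integral_Icc_eq_integral_Ioc,
      intervalIntegral.integral_of_le (by norm_num : (0:ℝ) ≤ 1)]
  have hd2eq : ∫ x : ℝ, (deriv f x)^2 = ∫ x in (0:ℝ)..1, (deriv f x)^2 := by
    rw [← MeasureTheory.setIntegral_eq_integral_of_forall_compl_eq_zero
      (s := Set.Icc (0:ℝ) 1) (fun x hx => by rw [hderiv0 x hx]; ring)]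
    rw [MeasureTheory.integral_Icc_eq_integral_Ioc,
      intervalIntegral.integral_of_le (by norm_num : (0:ℝ) ≤ 1)]
  have hHsplit : H 1 = (∫ x in (0:ℝ)..1, (deriv f x)^2) - π^2 * ∫ x in (0:ℝ)..1, (f x)^2 := by
    have h1 : IntervalIntegrable (fun x => (deriv f x)^2) volume 0 1 :=
      ((hf'c.pow 2).intervalIntegrable 0 1)
    have h2 : IntervalIntegrable (fun x => π^2 * (f x)^2) volume 0 1 :=
      ((continuous_const.mul (hfc.pow 2)).intervalIntegrable 0 1)
    have hr : H 1 = ∫ x in (0:ℝ)..1, ((deriv f x)^2 - π^2 * (f x)^2) := rfl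
    rw [hr, intervalIntegral.integral_sub h1 h2, intervalIntegral.integral_const_mul]
  rw [hf2eq, hd2eq]
  rw [hHsplit] at hH1
  linarith

/-- Poincaré inequality on the unit square with the sharp constant
`λ₁((0,1)²) = 2π²`. -/
theorem poincare_unit_square
    (v : EuclideanSpace ℝ (Fin 2) → ℝ) (hv : ContDiff ℝ 1 v)
    (hv0 : ∀ x : EuclideanSpace ℝ (Fin 2),
      x ∉ {y : EuclideanSpace ℝ (Fin 2) |
        0 < y 0 ∧ y 0 < 1 ∧ 0 < y 1 ∧ y 1 < 1} → v x = 0) :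
    2 * Real.pi ^ 2 * ∫ x, (v x) ^ 2 ≤ ∫ x, ‖fderiv ℝ v x‖ ^ 2 := by
  have oneD := poincare_aux_oneD
  have hvc : Continuous v := hv.continuous
  have hvd : Differentiable ℝ v := hv.differentiable one_ne_zero
  have hfc : Continuous (fderiv ℝ v) := hv.continuous_fderiv one_ne_zero
  -- vanishing outside a ball
  have hSnorm : ∀ x : E2, (2:ℝ) < ‖x‖ → v x = 0 := by
    intro x hx
    apply hv0
    intro hm
    have h0 : ‖x‖ ≤ 2 := by
      rw [EuclideanSpace.norm_eq]
      have : ∑ i : Fin 2, ‖x i‖^2 ≤ 4 := by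
        rw [Fin.sum_univ_two]
        have h1 : |x 0| ≤ 1 := by
          rw [abs_le]; constructor <;> [linarith [hm.1]; linarith [hm.2.1]]
        have h2 : |x 1| ≤ 1 := by
          rw [abs_le]; constructor <;> [linarith [hm.2.2.1]; linarith [hm.2.2.2]]
        simp only [Real.norm_eq_abs]
        nlinarith [abs_nonneg (x 0), abs_nonneg (x 1)]
      calc Real.sqrt (∑ i : Fin 2, ‖x i‖^2) ≤ Real.sqrt 4 :=
            Real.sqrt_le_sqrt this
        _ = 2 := by rw [show (4:ℝ) = 2^2 by norm_num, Real.sqrt_sq (by norm_num)]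
    linarith
  have hfderiv0 : ∀ x : E2, (2:ℝ) < ‖x‖ → fderiv ℝ v x = 0 := by
    intro x hx
    have hev : v =ᶠ[nhds x] (fun _ => 0) := by
      have hball : Metric.ball x (‖x‖ - 2) ∈ nhds x :=
        Metric.ball_mem_nhds x (by linarith)
      filter_upwards [hball] with y hy
      apply hSnorm
      have h1 : dist x y < ‖x‖ - 2 := by
        rw [Metric.mem_ball] at hy; rwa [dist_comm] at hy
      have h2 : ‖x‖ - ‖y‖ ≤ dist x y := by
        rw [dist_eq_norm]; exact norm_sub_norm_le x y
      linarith
    rw [hev.fderiv_eq]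
    exact fderiv_const_apply 0
  -- partial derivatives
  set d0 : E2 → ℝ := fun x => fderiv ℝ v x (EuclideanSpace.single 0 1) with hd0
  set d1 : E2 → ℝ := fun x => fderiv ℝ v x (EuclideanSpace.single 1 1) with hd1
  have hnormid : ∀ x : E2, ‖fderiv ℝ v x‖^2 = (d0 x)^2 + (d1 x)^2 := by
    intro x
    show ‖fderiv ℝ v x‖^2 = (fderiv ℝ v x (EuclideanSpace.single 0 1))^2
      + (fderiv ℝ v x (EuclideanSpace.single 1 1))^2
    set L := fderiv ℝ v x with hL
    set y := (InnerProductSpace.toDual ℝ E2).symm L with hy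
    have hnorm : ‖L‖ = ‖y‖ := ((InnerProductSpace.toDual ℝ E2).symm.norm_map L).symm
    have happ : ∀ i : Fin 2, L (EuclideanSpace.single i 1) = y i := by
      intro i
      rw [← InnerProductSpace.toDual_symm_apply (𝕜 := ℝ) (y := L)
        (x := EuclideanSpace.single i 1)]
      rw [EuclideanSpace.inner_single_right]
      simp
      rfl
    have h2 : ‖y‖^2 = (y 0)^2 + (y 1)^2 := by
      rw [EuclideanSpace.norm_eq, Real.sq_sqrt (by positivity)]
      simp [Fin.sum_univ_two, sq_abs]
    rw [hnorm, h2, happ 0, happ 1]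
  -- continuity
  have hd0c : Continuous d0 := hfc.clm_apply continuous_const
  have hd1c : Continuous d1 := hfc.clm_apply continuous_const
  -- integrability machinery
  have hbig : ∀ (g : E2 → ℝ), (∀ x, (2:ℝ) < ‖x‖ → g x = 0) → Continuous g →
      Integrable g (volume : Measure E2) := by
    intro g hg hgc
    apply hgc.integrable_of_hasCompactSupport
    apply HasCompactSupport.intro (isCompact_closedBall (0:E2) 2)
    intro x hx
    apply hg
    simpa [Metric.mem_closedBall, dist_zero_right] using hx
  have hIv2 : Integrable (fun x : E2 => (v x)^2) volume :=
    hbig _ (fun x hx => by rw [hSnorm x hx]; ring) (hvc.pow 2)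
  have hId0 : Integrable (fun x : E2 => (d0 x)^2) volume :=
    hbig _ (fun x hx => by rw [hd0]; simp [hfderiv0 x hx]) (hd0c.pow 2)
  have hId1 : Integrable (fun x : E2 => (d1 x)^2) volume :=
    hbig _ (fun x hx => by rw [hd1]; simp [hfderiv0 x hx]) (hd1c.pow 2)
  have hInorm : Integrable (fun x : E2 => ‖fderiv ℝ v x‖^2) volume :=
    hbig _ (fun x hx => by rw [hfderiv0 x hx]; simp) ((hfc.norm).pow 2)
  -- transfer to ℝ × ℝ
  set φ : E2 ≃ᵐ ℝ × ℝ :=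
    (MeasurableEquiv.toLp 2 (Fin 2 → ℝ)).symm.trans (MeasurableEquiv.finTwoArrow) with hφ
  have hφmp : MeasurePreserving φ (volume : Measure E2) (volume : Measure (ℝ × ℝ)) :=
    (volume_preserving_finTwoArrow ℝ).comp
      (PiLp.volume_preserving_ofLp (Fin 2))
  set p : ℝ × ℝ → E2 := fun z => φ.symm z with hp
  have hpmp : MeasurePreserving p (volume : Measure (ℝ × ℝ)) (volume : Measure E2) :=
    hφmp.symm φ
  have hpemb : MeasurableEmbedding p := φ.symm.measurableEmbedding
  have hp0 : ∀ z : ℝ × ℝ, (p z) 0 = z.1 := fun z => rfl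
  have hp1 : ∀ z : ℝ × ℝ, (p z) 1 = z.2 := fun z => rfl
  have htrans : ∀ (g : E2 → ℝ), (∫ x, g x) = ∫ z : ℝ × ℝ, g (p z) :=
    fun g => (hpmp.integral_comp hpemb g).symm
  have htransInt : ∀ (g : E2 → ℝ), Integrable g (volume : Measure E2) →
      Integrable (fun z : ℝ × ℝ => g (p z)) volume :=
    fun g hg => (hpmp.integrable_comp_emb hpemb).2 hg
  -- slice analysis
  have hpeq : p = fun z : ℝ × ℝ =>
      z.1 • (EuclideanSpace.single (0 : Fin 2) (1:ℝ))
        + z.2 • (EuclideanSpace.single (1 : Fin 2) (1:ℝ)) := by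
    funext z
    ext i
    fin_cases i
    · show z.1 = _
      simp [EuclideanSpace.single_apply]
    · show z.2 = _
      simp [EuclideanSpace.single_apply]
  have hpsmooth : ContDiff ℝ 1 p := by
    rw [hpeq]
    exact (contDiff_fst.smul contDiff_const).add (contDiff_snd.smul contDiff_const)
  have hcurve0 : ∀ b a : ℝ, HasDerivAt (fun t : ℝ => p (t, b))
      (EuclideanSpace.single (0 : Fin 2) (1:ℝ)) a := by
    intro b a
    have heq : (fun t : ℝ => p (t, b)) = fun t : ℝ =>
        t • (EuclideanSpace.single (0 : Fin 2) (1:ℝ))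
          + b • (EuclideanSpace.single (1 : Fin 2) (1:ℝ)) := by
      rw [hpeq]
    rw [heq]
    simpa using ((hasDerivAt_id a).smul_const
      (EuclideanSpace.single (0 : Fin 2) (1:ℝ))).add_const
      (b • (EuclideanSpace.single (1 : Fin 2) (1:ℝ)))
  have hcurve1 : ∀ a b : ℝ, HasDerivAt (fun t : ℝ => p (a, t))
      (EuclideanSpace.single (1 : Fin 2) (1:ℝ)) b := by
    intro a b
    have heq : (fun t : ℝ => p (a, t)) = fun t : ℝ =>
        a • (EuclideanSpace.single (0 : Fin 2) (1:ℝ))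
          + t • (EuclideanSpace.single (1 : Fin 2) (1:ℝ)) := by
      rw [hpeq]
    rw [heq]
    simpa using (((hasDerivAt_id b).smul_const
      (EuclideanSpace.single (1 : Fin 2) (1:ℝ))).const_add
      (a • (EuclideanSpace.single (0 : Fin 2) (1:ℝ))))
  have slice0 : ∀ b : ℝ,
      Real.pi^2 * ∫ a : ℝ, (v (p (a, b)))^2 ≤ ∫ a : ℝ, (d0 (p (a, b)))^2 := by
    intro b
    have hcd : ContDiff ℝ 1 (fun a : ℝ => v (p (a, b))) :=
      hv.comp (hpsmooth.comp ((contDiff_id).prodMk contDiff_const))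
    have hvan : ∀ a : ℝ, a ∉ Set.Ioo (0:ℝ) 1 → v (p (a, b)) = 0 := by
      intro a ha
      apply hv0
      intro hm
      simp only [Set.mem_setOf_eq] at hm
      rw [hp0 (a, b)] at hm
      exact ha ⟨hm.1, hm.2.1⟩
    have hderiv : ∀ a : ℝ, deriv (fun t : ℝ => v (p (t, b))) a = d0 (p (a, b)) := by
      intro a
      exact ((hvd (p (a, b))).hasFDerivAt.comp_hasDerivAt a (hcurve0 b a)).deriv
    have := oneD (fun a : ℝ => v (p (a, b))) hcd hvan
    calc Real.pi^2 * ∫ a : ℝ, (v (p (a, b)))^2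
        ≤ ∫ a : ℝ, (deriv (fun t : ℝ => v (p (t, b))) a)^2 := this
      _ = ∫ a : ℝ, (d0 (p (a, b)))^2 := by
          congr 1; funext a; rw [hderiv a]
  have slice1 : ∀ a : ℝ,
      Real.pi^2 * ∫ b : ℝ, (v (p (a, b)))^2 ≤ ∫ b : ℝ, (d1 (p (a, b)))^2 := by
    intro a
    have hcd : ContDiff ℝ 1 (fun b : ℝ => v (p (a, b))) :=
      hv.comp (hpsmooth.comp ((contDiff_const).prodMk contDiff_id))
    have hvan : ∀ b : ℝ, b ∉ Set.Ioo (0:ℝ) 1 → v (p (a, b)) = 0 := by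
      intro b hb
      apply hv0
      intro hm
      simp only [Set.mem_setOf_eq] at hm
      rw [hp1 (a, b)] at hm
      exact hb ⟨hm.2.2.1, hm.2.2.2⟩
    have hderiv : ∀ b : ℝ, deriv (fun t : ℝ => v (p (a, t))) b = d1 (p (a, b)) := by
      intro b
      exact ((hvd (p (a, b))).hasFDerivAt.comp_hasDerivAt b (hcurve1 a b)).deriv
    have := oneD (fun b : ℝ => v (p (a, b))) hcd hvan
    calc Real.pi^2 * ∫ b : ℝ, (v (p (a, b)))^2
        ≤ ∫ b : ℝ, (deriv (fun t : ℝ => v (p (a, t))) b)^2 := this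
      _ = ∫ b : ℝ, (d1 (p (a, b)))^2 := by
          congr 1; funext b; rw [hderiv b]
  -- Fubini direction 0
  have hIpv2 : Integrable (fun z : ℝ × ℝ => (v (p z))^2) volume :=
    htransInt _ hIv2
  have hIpd0 : Integrable (fun z : ℝ × ℝ => (d0 (p z))^2) volume :=
    htransInt _ hId0
  have hIpd1 : Integrable (fun z : ℝ × ℝ => (d1 (p z))^2) volume :=
    htransInt _ hId1
  have ineq0 : Real.pi^2 * ∫ x : E2, (v x)^2 ≤ ∫ x : E2, (d0 x)^2 := by
    rw [htrans (fun x => (v x)^2), htrans (fun x => (d0 x)^2)]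
    rw [MeasureTheory.Measure.volume_eq_prod] at hIpv2 hIpd0 ⊢
    rw [MeasureTheory.integral_prod_symm _ hIpv2, MeasureTheory.integral_prod_symm _ hIpd0]
    rw [← MeasureTheory.integral_const_mul]
    apply integral_mono
    · exact (hIpv2.swap.integral_prod_left).const_mul _
    · exact hIpd0.swap.integral_prod_left
    · intro b
      exact slice0 b
  have ineq1 : Real.pi^2 * ∫ x : E2, (v x)^2 ≤ ∫ x : E2, (d1 x)^2 := by
    rw [htrans (fun x => (v x)^2), htrans (fun x => (d1 x)^2)]
    rw [MeasureTheory.Measure.volume_eq_prod] at hIpv2 hIpd1 ⊢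
    rw [MeasureTheory.integral_prod _ hIpv2, MeasureTheory.integral_prod _ hIpd1]
    rw [← MeasureTheory.integral_const_mul]
    apply integral_mono
    · exact (hIpv2.integral_prod_left).const_mul _
    · exact hIpd1.integral_prod_left
    · intro a
      exact slice1 a
  have hsum : (∫ x : E2, ‖fderiv ℝ v x‖^2) = (∫ x : E2, (d0 x)^2) + ∫ x : E2, (d1 x)^2 := by
    rw [← MeasureTheory.integral_add hId0 hId1]
    congr 1; funext x; exact hnormid x
  rw [hsum]
  linarith
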